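/- In the stack-based transition system R4, for all integers n, c with n ≥ 0 and every stack p : Proc, the term env c (stack (sumS n) p) reduces to env (c+n+1) (stack (retS ((n*(n+1))/2)) p); that is, Relation.ReflTransGen step4 (env c (stack (sumS n) p)) (env (c+n+1) (stack (retS ((n*(n+1))/2)) p)) holds. In words: executing a call of sum(n) on top of an arbitrary stack p returns 0+1+...+n, increments the global variable num by n+1, and leaves the rest of the stack p unchanged. -/

import Mathlib

inductive State : Type
  | mainS : State
  | sumS : ℤ → State
  | u1 : ℤ → ℤ → State
  | u2 : ℤ → ℤ → State
  | u3 : ℤ → ℤ → State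
  | u4 : ℤ → ℤ → State
  | u5 : ℤ → ℤ → State
  | u6 : ℤ → ℤ → State
  | u7 : ℤ → ℤ → State
  | u8 : ℤ → ℤ → State
  | u9 : ℤ → ℤ → State
  | retS : ℤ → State
  | u10 : ℤ → State
  | u11 : ℤ → State
  | u12 : ℤ → State

inductive Proc : Type
  | bot : Proc
  | stack : State → Proc → Proc

inductive Env : Type
  | env : ℤ → Proc → Env

open State Proc Env

inductive L : State → State → Prop
  | sum_init (x : ℤ) : L (sumS x) (u1 x 0)
  | u2_then (x z : ℤ) : x ≤ 0 → L (u2 x z) (u3 x z)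
  | u2_else (x z : ℤ) : ¬ x ≤ 0 → L (u2 x z) (u5 x z)
  | u3_step (x z : ℤ) : L (u3 x z) (u4 x 0)
  | u4_step (x z : ℤ) : L (u4 x z) (u9 x z)
  | u7_step (x z : ℤ) : L (u7 x z) (u8 x (x+z))
  | u8_step (x z : ℤ) : L (u8 x z) (u9 x z)
  | u9_step (x z : ℤ) : L (u9 x z) (retS z)
  | main_step : L mainS (u10 3)
  | u12_step (z : ℤ) : L (u12 z) (retS 0)

inductive step4 : Env → Env → Prop
  | lift (num : ℤ) {s s' : State} (p : Proc) :
      L s s' → step4 (env num (stack s p)) (env num (stack s' p))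
  | incr (num x z : ℤ) (p : Proc) :
      step4 (env num (stack (u1 x z) p)) (env (num+1) (stack (u2 x z) p))
  | push (num x z : ℤ) (p : Proc) :
      step4 (env num (stack (u5 x z) p)) (env num (stack (sumS (x-1)) (stack (u6 x z) p)))
  | pop (num y x z : ℤ) (p : Proc) :
      step4 (env num (stack (retS y) (stack (u6 x z) p))) (env num (stack (u7 x y) p))
  | push_main (num z : ℤ) (p : Proc) :
      step4 (env num (stack (u10 z) p)) (env num (stack (sumS z) (stack (u11 z) p)))
  | pop_main (num y z : ℤ) (p : Proc) :
      step4 (env num (stack (retS y) (stack (u11 z) p))) (env num (stack (u12 y) p))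

theorem stmt_12 (n c : ℤ) (hn : n ≥ 0) (p : Proc) :
    Relation.ReflTransGen step4 (env c (stack (sumS n) p))
      (env (c+n+1) (stack (retS ((n*(n+1))/2)) p)) := by
  have key : ∀ n : ℤ, 0 ≤ n → ∀ c p, Relation.ReflTransGen step4 (env c (stack (sumS n) p))
      (env (c+n+1) (stack (retS ((n*(n+1))/2)) p)) := by
    refine fun n hn => Int.le_induction (motive := fun n _ => ∀ c p, Relation.ReflTransGen step4 (env c (stack (sumS n) p)) (env (c+n+1) (stack (retS ((n*(n+1))/2)) p))) ?_ ?_ n hn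
    · intro c p
      have e : ((0:ℤ)*(0+1))/2 = 0 := by norm_num
      refine .head (step4.lift c p (L.sum_init 0)) ?_
      refine .head (step4.incr c 0 0 p) ?_
      refine .head (step4.lift (c+1) p (L.u2_then 0 0 le_rfl)) ?_
      refine .head (step4.lift (c+1) p (L.u3_step 0 0)) ?_
      refine .head (step4.lift (c+1) p (L.u4_step 0 0)) ?_
      refine .head (step4.lift (c+1) p (L.u9_step 0 0)) ?_
      rw [e]
      norm_num
      exact .refl
    · intro n hn ih c p
      have hdvd : (2:ℤ) ∣ n*(n+1) := (Int.even_mul_succ_self n).two_dvd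
      have h2 : 2*(n*(n+1)/2) = n*(n+1) := Int.mul_ediv_cancel' hdvd
      have e : (n+1) + n*(n+1)/2 = ((n+1)*((n+1)+1))/2 := by
        have hdvd2 : (2:ℤ) ∣ (n+1)*(n+1+1) := (Int.even_mul_succ_self (n+1)).two_dvd
        have h3 : 2*((n+1)*(n+1+1)/2) = (n+1)*(n+1+1) := Int.mul_ediv_cancel' hdvd2
        have h4 : (n+1)*(n+1+1) = n*(n+1) + 2*(n+1) := by ring
        omega
      refine .head (step4.lift c p (L.sum_init (n+1))) ?_
      refine .head (step4.incr c (n+1) 0 p) ?_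
      refine .head (step4.lift (c+1) p (L.u2_else (n+1) 0 (by omega))) ?_
      refine .head (step4.push (c+1) (n+1) 0 p) ?_
      have e1 : n + 1 - 1 = n := by ring
      rw [e1]
      refine .trans (ih (c+1) (stack (u6 (n+1) 0) p)) ?_
      refine .head (step4.pop (c+1+n+1) (n*(n+1)/2) (n+1) 0 p) ?_
      refine .head (step4.lift (c+1+n+1) p (L.u7_step (n+1) (n*(n+1)/2))) ?_
      refine .head (step4.lift (c+1+n+1) p (L.u8_step (n+1) ((n+1)+n*(n+1)/2))) ?_
      refine .head (step4.lift (c+1+n+1) p (L.u9_step (n+1) ((n+1)+n*(n+1)/2))) ?_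
      rw [e]
      have hc : c+1+n+1 = c+(n+1)+1 := by ring
      rw [hc]
  exact key n hn c p
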